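/- Let G be a connected graph with Perron eigenvector x of the adjacency matrix (positive, unit norm) and spectral radius ρ. Then Δ(G) − ρ(G) = Σ_{u∈V(G)} (Δ(G) − d(u)) x_u² + Σ_{uv∈E(G)} (x_u − x_v)². -/
import Mathlib


open Matrix SimpleGraph Finset

attribute [local instance] Classical.propDecidable

/-- The spectral radius of a finite simple graph: the largest eigenvalue of its
adjacency matrix (as the supremum of its real spectrum). -/
noncomputable def specRad {V : Type*} [Fintype V] [DecidableEq V] (G : SimpleGraph V) : ℝ :=
  sSup (spectrum ℝ (G.adjMatrix ℝ))

/-- The diameter of a graph: the maximum distance between two vertices. -/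
noncomputable def graphDiam {V : Type*} [Fintype V] (G : SimpleGraph V) : ℕ :=
  sSup (Set.range fun p : V × V => G.dist p.1 p.2)

/-- The edge-connectivity of a graph: the minimum number of edges whose deletion
disconnects the graph. -/
noncomputable def edgeConn {V : Type*} [Fintype V] [DecidableEq V] (G : SimpleGraph V) : ℕ :=
  sInf {c | ∃ s : Finset (Sym2 V), s.card = c ∧ ↑s ⊆ G.edgeSet ∧
    ¬ (G.deleteEdges ↑s).Preconnected}

/-- `G` is distance-hereditary: in every connected induced subgraph, distances agree with
the distances in `G`. -/
def IsDistHereditary {V : Type*} (G : SimpleGraph V) : Prop :=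
  ∀ s : Set V, (G.induce s).Connected → ∀ u v : s, (G.induce s).dist u v = G.dist ↑u ↑v

section Aux
variable {V : Type*} [Fintype V] [DecidableEq V] (G : SimpleGraph V) [DecidableRel G.Adj]

lemma dartSum (f : V → V → ℝ) :
    ∑ d : G.Dart, f d.fst d.snd = ∑ v, ∑ w ∈ G.neighborFinset v, f v w := by
  rw [← Finset.sum_fiberwise_of_maps_to (g := fun d : G.Dart => d.fst) (t := Finset.univ)
    (fun d _ => Finset.mem_univ _) (fun d => f d.fst d.snd)]
  refine Finset.sum_congr rfl fun v _ => ?_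
  rw [show (Finset.univ.filter fun d : G.Dart => d.fst = v) = Finset.univ.image (G.dartOfNeighborSet v) from G.dart_fst_fiber v,
    Finset.sum_image (fun a _ b _ h => G.dartOfNeighborSet_injective v h)]
  rw [show (G.neighborFinset v) = (G.neighborSet v).toFinset from rfl, ← Finset.sum_set_coe]
  rfl

lemma dartSymmSum (f : V → V → ℝ) :
    ∑ d : G.Dart, f d.fst d.snd = ∑ d : G.Dart, f d.snd d.fst := by
  have hb : Function.Bijective (SimpleGraph.Dart.symm (G := G)) :=
    Function.Involutive.bijective (fun d => SimpleGraph.Dart.symm_symm d)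
  exact (Fintype.sum_bijective _ hb _ _ (fun d => rfl)).symm

lemma dartEdgeSum (f : Sym2 V → ℝ) :
    ∑ d : G.Dart, f d.edge = 2 * ∑ e ∈ G.edgeFinset, f e := by
  rw [← Finset.sum_fiberwise_of_maps_to (g := fun d : G.Dart => d.edge) (t := G.edgeFinset)
    (fun d _ => by simpa using d.edge_mem) (fun d => f d.edge), Finset.mul_sum]
  refine Finset.sum_congr rfl fun e he => ?_
  rw [Finset.sum_congr rfl (fun d hd => by rw [(Finset.mem_filter.mp hd).2]),
    Finset.sum_const, G.dart_edge_fiber_card e (by simpa using he)]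
  simp [mul_comm]

end Aux

theorem stmt8 {V : Type*} [Fintype V] [DecidableEq V] (G : SimpleGraph V)
    (hconn : G.Connected)
    -- `x` is the positive unit Perron eigenvector of the adjacency matrix
    (x : V → ℝ) (hxpos : ∀ w, 0 < x w) (hxunit : ∑ w, x w ^ 2 = 1)
    (heig : G.adjMatrix ℝ *ᵥ x = specRad G • x) :
    (G.maxDegree : ℝ) - specRad G =
      (∑ u : V, ((G.maxDegree : ℝ) - (G.degree u : ℝ)) * x u ^ 2) +
      ∑ e ∈ G.edgeFinset,
        Sym2.lift ⟨fun a b => (x a - x b) ^ 2, fun a b => by ring⟩ e := by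
  
  classical
  set ρ := specRad G with hρ
  set D := ∑ u, (G.degree u : ℝ) * x u ^ 2 with hD
  have hAx : ∀ v, ∑ w ∈ G.neighborFinset v, x w = ρ * x v := by
    intro v
    have := congrFun heig v
    simpa [SimpleGraph.adjMatrix_mulVec_apply] using this
  have hS3 : ∑ d : G.Dart, x d.fst * x d.snd = ρ := by
    rw [dartSum G (fun u v => x u * x v)]
    have h1 : ∀ v : V, ∑ w ∈ G.neighborFinset v, x v * x w = ρ * x v ^ 2 := by
      intro v; rw [← Finset.mul_sum, hAx v]; ring
    rw [Finset.sum_congr rfl (fun v _ => h1 v), ← Finset.mul_sum, hxunit, mul_one]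
  have hS1 : ∑ d : G.Dart, x d.fst ^ 2 = D := by
    rw [dartSum G (fun u v => x u ^ 2), hD]
    refine Finset.sum_congr rfl fun v _ => ?_
    rw [Finset.sum_const, SimpleGraph.card_neighborFinset_eq_degree, nsmul_eq_mul]
  have hS2 : ∑ d : G.Dart, x d.snd ^ 2 = D := by
    rw [dartSymmSum G (fun u v => x v ^ 2)]; exact hS1
  have hE : ∑ e ∈ G.edgeFinset,
      Sym2.lift ⟨fun a b => (x a - x b) ^ 2, fun a b => by ring⟩ e = D - ρ := by
    have h2 := dartEdgeSum G (Sym2.lift ⟨fun a b => (x a - x b) ^ 2, fun a b => by ring⟩)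
    have h3 : ∑ d : G.Dart,
        Sym2.lift ⟨fun a b => (x a - x b) ^ 2, fun a b => by ring⟩ d.edge
        = ∑ d : G.Dart, ((x d.fst ^ 2 + x d.snd ^ 2) - 2 * (x d.fst * x d.snd)) := by
      refine Finset.sum_congr rfl fun d _ => ?_
      show (x d.fst - x d.snd) ^ 2 = _
      ring
    rw [h3, Finset.sum_sub_distrib, Finset.sum_add_distrib, hS1, hS2, ← Finset.mul_sum,
      hS3] at h2
    linarith
  have hL : ∑ u : V, ((G.maxDegree : ℝ) - (G.degree u : ℝ)) * x u ^ 2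
      = (G.maxDegree : ℝ) - D := by
    have : ∑ u : V, ((G.maxDegree : ℝ) - (G.degree u : ℝ)) * x u ^ 2
        = (G.maxDegree : ℝ) * ∑ u, x u ^ 2 - D := by
      rw [hD, Finset.mul_sum, ← Finset.sum_sub_distrib]
      exact Finset.sum_congr rfl fun u _ => by ring
    rw [this, hxunit, mul_one]
  rw [hE, hL]
  ring
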